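/- arXiv:2211.01853 — 2 statements merged into one kernel-verified Lean document; each statement's English description precedes it below -/
import Mathlib

section
/- Let u : ℝ → ℝ be a function of bounded variation and δ : ℝ → ℝ a bounded nonnegative measurable function. Then ∫_{ℝ} |u(x + δ(x)) - u(x)| dx ≤ TV(u) · ‖δ‖_∞. -/
open MeasureTheory
open scoped ENNReal

/-- For `u ∈ BV(ℝ;ℝ)` and `δ ∈ L∞(ℝ;ℝ₊)` with `0 ≤ δ ≤ M`,
`∫ |u(x+δ(x)) - u(x)| dx ≤ TV(u)·‖δ‖_∞`. -/
theorem bv_shift_estimate (u : ℝ → ℝ) (δ : ℝ → ℝ) (M : ℝ)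
    (hu : Integrable u) (hbv : BoundedVariationOn u Set.univ)
    (hδmeas : Measurable δ) (hδ0 : ∀ x, 0 ≤ δ x) (hδM : ∀ x, δ x ≤ M) :
    ∫⁻ x, ENNReal.ofReal |u (x + δ x) - u x| ≤
      eVariationOn u Set.univ * ENNReal.ofReal M := by
  have hM : 0 ≤ M := le_trans (hδ0 0) (hδM 0)
  set F : ℝ → ℝ := fun x => variationOnFromTo u Set.univ 0 x with hFdef
  have hlbv : LocallyBoundedVariationOn u Set.univ := hbv.locallyBoundedVariationOn
  have hFmono : Monotone F := fun a b hab =>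
    variationOnFromTo.monotoneOn hlbv (Set.mem_univ (0:ℝ))
      (Set.mem_univ a) (Set.mem_univ b) hab
  have hdiff : ∀ a b : ℝ, F b - F a = variationOnFromTo u Set.univ a b := by
    intro a b
    have h := variationOnFromTo.add hlbv (Set.mem_univ (0:ℝ)) (Set.mem_univ a)
      (Set.mem_univ b)
    simp only [hFdef]
    linarith
  set C : ℝ := (eVariationOn u Set.univ).toReal with hCdef
  have hC : ∀ a b : ℝ, a ≤ b → F b - F a ≤ C := by
    intro a b hab
    rw [hdiff, variationOnFromTo.eq_of_le u Set.univ hab]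
    exact ENNReal.toReal_mono hbv (eVariationOn.mono u Set.inter_subset_left)
  set G : ℝ → ℝ := fun x => F (x + M) - F x with hGdef
  have hG0 : ∀ x, 0 ≤ G x := fun x =>
    sub_nonneg.2 (hFmono (le_add_of_nonneg_right hM))
  -- pointwise bound
  have hpt : ∀ x, |u (x + δ x) - u x| ≤ G x := by
    intro x
    have hmem1 : (x + δ x) ∈ Set.univ ∩ Set.Icc x (x + M) :=
      ⟨trivial, le_add_of_nonneg_right (hδ0 x), by linarith [hδM x]⟩
    have hmem2 : x ∈ Set.univ ∩ Set.Icc x (x + M) :=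
      ⟨trivial, le_refl x, by linarith⟩
    have hfin : eVariationOn u (Set.univ ∩ Set.Icc x (x + M)) ≠ ⊤ :=
      fun h => hbv (top_le_iff.1 (h ▸ eVariationOn.mono u Set.inter_subset_left))
    have h1 : dist (u (x + δ x)) (u x)
        ≤ (eVariationOn u (Set.univ ∩ Set.Icc x (x + M))).toReal := by
      rw [dist_edist]
      exact ENNReal.toReal_mono hfin (eVariationOn.edist_le u hmem1 hmem2)
    have h2 : G x = (eVariationOn u (Set.univ ∩ Set.Icc x (x + M))).toReal := by
      rw [hGdef]
      simp only
      rw [hdiff, variationOnFromTo.eq_of_le u Set.univ (by linarith : x ≤ x + M)]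
    rw [h2, ← Real.dist_eq]
    exact h1
  -- reduce to G
  have step1 : ∫⁻ x, ENNReal.ofReal |u (x + δ x) - u x|
      ≤ ∫⁻ x, ENNReal.ofReal (G x) :=
    lintegral_mono fun x => ENNReal.ofReal_le_ofReal (hpt x)
  refine step1.trans ?_
  -- measurability
  have hFshiftmono : Monotone (fun x => F (x + M)) :=
    fun a b hab => hFmono (by linarith)
  have hGmeas : Measurable G :=
    hFshiftmono.measurable.sub hFmono.measurable
  have hg'meas : Measurable fun x => ENNReal.ofReal (G x) :=
    ENNReal.measurable_ofReal.comp hGmeas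
  -- bound on each compact interval
  have key : ∀ n : ℕ, ∫⁻ x in Set.Icc (-(n:ℝ)) n, ENNReal.ofReal (G x)
      ≤ eVariationOn u Set.univ * ENNReal.ofReal M := by
    intro n
    set a : ℝ := -(n : ℝ)
    set b : ℝ := (n : ℝ)
    have hab : a ≤ b := by
      have : (0:ℝ) ≤ (n:ℝ) := Nat.cast_nonneg n
      simp only [a, b]
      linarith
    have hintF : ∀ p q : ℝ, IntervalIntegrable F volume p q :=
      fun p q => hFmono.intervalIntegrable
    have hintFs : IntervalIntegrable (fun x => F (x + M)) volume a b :=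
      hFshiftmono.intervalIntegrable
    have hGintOn : IntegrableOn G (Set.Icc a b) := by
      have h1 : IntegrableOn (fun x => F (x + M)) (Set.Icc a b) :=
        (hFshiftmono.monotoneOn _).integrableOn_isCompact isCompact_Icc
      have h2 : IntegrableOn F (Set.Icc a b) :=
        (hFmono.monotoneOn _).integrableOn_isCompact isCompact_Icc
      exact h1.sub h2
    have e0 : ∫⁻ x in Set.Icc a b, ENNReal.ofReal (G x)
        = ENNReal.ofReal (∫ x in Set.Icc a b, G x) :=
      (ofReal_integral_eq_lintegral_ofReal hGintOn
        (Filter.Eventually.of_forall fun x => hG0 x)).symm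
    rw [e0]
    -- compute the real integral
    have eIcc : ∫ x in Set.Icc a b, G x = ∫ x in a..b, G x := by
      rw [MeasureTheory.integral_Icc_eq_integral_Ioc,
        intervalIntegral.integral_of_le hab]
    have echasles : ∫ x in a..b, G x
        = (∫ x in b..(b + M), F x) - ∫ x in a..(a + M), F x := by
      have esub : ∫ x in a..b, G x
          = (∫ x in a..b, F (x + M)) - ∫ x in a..b, F x :=
        intervalIntegral.integral_sub hintFs (hintF a b)
      have eshift : (∫ x in a..b, F (x + M)) = ∫ x in (a + M)..(b + M), F x :=
        intervalIntegral.integral_comp_add_right F M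
      have c1 : (∫ x in a..(a + M), F x) + ∫ x in (a + M)..(b + M), F x
          = ∫ x in a..(b + M), F x :=
        intervalIntegral.integral_add_adjacent_intervals (hintF _ _) (hintF _ _)
      have c2 : (∫ x in a..b, F x) + ∫ x in b..(b + M), F x
          = ∫ x in a..(b + M), F x :=
        intervalIntegral.integral_add_adjacent_intervals (hintF _ _) (hintF _ _)
      rw [esub, eshift]
      linarith
    have hbM : b ≤ b + M := by linarith
    have haM : a ≤ a + M := by linarith
    have hupper : (∫ x in b..(b + M), F x) ≤ M * F (b + M) := by
      have hmono' : ∀ x ∈ Set.Icc b (b + M), F x ≤ F (b + M) :=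
        fun x hx => hFmono hx.2
      have h := intervalIntegral.integral_mono_on hbM (hintF b (b + M))
        intervalIntegrable_const hmono'
      have heq : (∫ _x in b..(b + M), F (b + M)) = M * F (b + M) := by
        rw [intervalIntegral.integral_const, smul_eq_mul, add_sub_cancel_left]
      exact heq ▸ h
    have hlower : M * F a ≤ ∫ x in a..(a + M), F x := by
      have hmono' : ∀ x ∈ Set.Icc a (a + M), F a ≤ F x :=
        fun x hx => hFmono hx.1
      have h := intervalIntegral.integral_mono_on haM intervalIntegrable_const
        (hintF a (a + M)) hmono'
      have heq : (∫ _x in a..(a + M), F a) = M * F a := by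
        rw [intervalIntegral.integral_const, smul_eq_mul, add_sub_cancel_left]
      exact heq ▸ h
    have hreal : ∫ x in Set.Icc a b, G x ≤ M * C := by
      rw [eIcc, echasles]
      have hFC : F (b + M) - F a ≤ C := hC a (b + M) (by linarith)
      nlinarith
    calc ENNReal.ofReal (∫ x in Set.Icc a b, G x)
        ≤ ENNReal.ofReal (M * C) := ENNReal.ofReal_le_ofReal hreal
      _ = ENNReal.ofReal C * ENNReal.ofReal M := by
          rw [ENNReal.ofReal_mul hM, mul_comm]
      _ = eVariationOn u Set.univ * ENNReal.ofReal M := by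
          rw [hCdef, ENNReal.ofReal_toReal hbv]
  -- monotone convergence over Icc (-n) n
  have hsup : ∫⁻ x, ENNReal.ofReal (G x)
      = ⨆ n : ℕ, ∫⁻ x in Set.Icc (-(n:ℝ)) n, ENNReal.ofReal (G x) := by
    have hmeas : ∀ n : ℕ, Measurable
        ((Set.Icc (-(n:ℝ)) n).indicator fun x => ENNReal.ofReal (G x)) :=
      fun n => hg'meas.indicator measurableSet_Icc
    have hmono : Monotone fun n : ℕ =>
        (Set.Icc (-(n:ℝ)) n).indicator fun x => ENNReal.ofReal (G x) := by
      intro m n hmn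
      apply Set.indicator_le_indicator_of_subset
      · exact Set.Icc_subset_Icc (by exact_mod_cast neg_le_neg (Nat.cast_le.2 hmn))
          (by exact_mod_cast hmn)
      · exact fun x => zero_le
    have hsupeq : ∀ x : ℝ, (⨆ n : ℕ,
        (Set.Icc (-(n:ℝ)) n).indicator (fun x => ENNReal.ofReal (G x)) x)
        = ENNReal.ofReal (G x) := by
      intro x
      apply le_antisymm
      · exact iSup_le fun n => Set.indicator_le_self _ _ x
      · obtain ⟨n, hn⟩ := exists_nat_ge |x|
        refine le_trans (le_of_eq ?_) (le_iSup _ n)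
        rw [Set.indicator_of_mem]
        constructor
        · linarith [abs_le.1 (le_trans (le_refl |x|) hn) |>.1, neg_abs_le x]
        · linarith [le_abs_self x]
    calc ∫⁻ x, ENNReal.ofReal (G x)
        = ∫⁻ x, ⨆ n : ℕ, (Set.Icc (-(n:ℝ)) n).indicator
            (fun x => ENNReal.ofReal (G x)) x := by
          congr 1; ext x; exact (hsupeq x).symm
      _ = ⨆ n : ℕ, ∫⁻ x, (Set.Icc (-(n:ℝ)) n).indicator
            (fun x => ENNReal.ofReal (G x)) x := lintegral_iSup hmeas hmono
      _ = ⨆ n : ℕ, ∫⁻ x in Set.Icc (-(n:ℝ)) n, ENNReal.ofReal (G x) := by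
          congr 1; ext n; exact lintegral_indicator measurableSet_Icc _
  rw [hsup]
  exact iSup_le key
end

section
/- Assume u' = f(t,u) where f is measurable in t, locally Lipschitz in u, and for every R > 0 the bound sup{‖f(t,u)‖ : t ≥ 0, ‖u‖ ≤ R} = F_∞(R) satisfies limsup_{R→∞} F_∞(R)/(R ln R) < ∞. Then every solution of the Cauchy problem u' = f(t,u), u(t₀) = u₀ extends to a global solution on [t₀, ∞). -/
open MeasureTheory intervalIntegral Filter Set Topology

section Aux

variable {E : Type*} [NormedAddCommGroup E] [NormedSpace ℝ E]

/-- Retraction onto the closed ball of radius `R`. -/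
noncomputable def ballProj (R : ℝ) (x : E) : E := (R / max R ‖x‖) • x

lemma ballProj_norm {R : ℝ} (hR : 0 < R) (x : E) :
    ‖ballProj R x‖ = min R ‖x‖ := by
  have hmax : 0 < max R ‖x‖ := lt_of_lt_of_le hR (le_max_left _ _)
  rw [ballProj, norm_smul, Real.norm_eq_abs, abs_of_nonneg (by positivity)]
  rcases le_total ‖x‖ R with h | h
  · rw [max_eq_left h, min_eq_right h, div_mul_eq_mul_div, mul_comm,
      mul_div_assoc, div_self hR.ne', mul_one]
  · have hx : 0 < ‖x‖ := lt_of_lt_of_le hR h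
    rw [max_eq_right h, min_eq_left h, div_mul_cancel₀ _ hx.ne']

lemma ballProj_le_R {R : ℝ} (hR : 0 < R) (x : E) : ‖ballProj R x‖ ≤ R := by
  rw [ballProj_norm hR]; exact min_le_left _ _

lemma ballProj_le_norm {R : ℝ} (hR : 0 < R) (x : E) : ‖ballProj R x‖ ≤ ‖x‖ := by
  rw [ballProj_norm hR]; exact min_le_right _ _

lemma ballProj_eq_self {R : ℝ} (hR : 0 < R) {x : E} (h : ‖x‖ ≤ R) :
    ballProj R x = x := by
  rw [ballProj, max_eq_left h, div_self hR.ne', one_smul]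

lemma ballProj_lipschitz {R : ℝ} (hR : 0 < R) (x y : E) :
    ‖ballProj R x - ballProj R y‖ ≤ 2 * ‖x - y‖ := by
  set a := max R ‖x‖ with ha_def
  set b := max R ‖y‖ with hb_def
  have ha : 0 < a := lt_of_lt_of_le hR (le_max_left _ _)
  have hb : 0 < b := lt_of_lt_of_le hR (le_max_left _ _)
  have hRa : R ≤ a := le_max_left _ _
  have hyb : ‖y‖ ≤ b := le_max_right _ _
  have key : ballProj R x - ballProj R y = (R / a) • (x - y) + ((R / a) - (R / b)) • y := by
    simp only [ballProj, smul_sub, sub_smul]; abel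
  have hba : |b - a| ≤ ‖x - y‖ := by
    have h1 : |b - a| ≤ |‖y‖ - ‖x‖| := by
      rw [hb_def, ha_def, max_comm R ‖y‖, max_comm R ‖x‖]
      exact abs_max_sub_max_le_abs _ _ _
    refine h1.trans ?_
    exact (abs_norm_sub_norm_le y x).trans (norm_sub_rev y x).le
  have h2 : |R / a - R / b| * ‖y‖ ≤ ‖x - y‖ := by
    have heq : R / a - R / b = R * (b - a) / (a * b) := by field_simp
    rw [heq, abs_div, abs_mul, abs_of_pos hR, abs_of_pos (mul_pos ha hb)]
    rw [div_mul_eq_mul_div, div_le_iff₀ (mul_pos ha hb)]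
    calc R * |b - a| * ‖y‖ ≤ a * ‖x - y‖ * b :=
          mul_le_mul (mul_le_mul hRa hba (abs_nonneg _) ha.le) hyb (norm_nonneg _)
            (by positivity)
      _ = ‖x - y‖ * (a * b) := by ring
  calc ‖ballProj R x - ballProj R y‖
      ≤ ‖(R / a) • (x - y)‖ + ‖((R / a) - (R / b)) • y‖ := by rw [key]; exact norm_add_le _ _
    _ ≤ 1 * ‖x - y‖ + |R / a - R / b| * ‖y‖ := by
        rw [norm_smul, norm_smul, Real.norm_eq_abs, Real.norm_eq_abs]
        gcongr
        rw [abs_of_nonneg (by positivity)]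
        exact (div_le_one ha).2 hRa
    _ ≤ ‖x - y‖ + ‖x - y‖ := by rw [one_mul]; gcongr
    _ = 2 * ‖x - y‖ := by ring

/-- Picard iterates. -/
noncomputable def picardIter (g : ℝ → E → E) (t₁ : ℝ) (u₁ : E) : ℕ → ℝ → E
  | 0 => fun _ => u₁
  | (k+1) => fun t => u₁ + ∫ s in t₁..t, g s (picardIter g t₁ u₁ k s)

end Aux

section Step

variable {E : Type*} [NormedAddCommGroup E] [NormedSpace ℝ E] [CompleteSpace E]
  [MeasurableSpace E] [BorelSpace E] [SecondCountableTopology E]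

set_option maxHeartbeats 1000000 in
/-- Short-time existence for a globally Lipschitz, bounded Carathéodory vector field,
with an exponential a priori bound coming from a linear growth estimate. -/
lemma caratheodory_step (g : ℝ → E → E) (L M K c : ℝ)
    (hL : 0 ≤ L) (hM : 0 ≤ M) (hK : 0 < K) (hc : 0 ≤ c)
    (hgm : ∀ x, Measurable fun s => g s x)
    (hgl : ∀ s x y, ‖g s x - g s y‖ ≤ L * ‖x - y‖)
    (hgb : ∀ s x, ‖g s x‖ ≤ M)
    (hgrow : ∀ s x, ‖g s x‖ ≤ K * (‖x‖ + c))
    (t₁ t₂ : ℝ) (ht : t₁ ≤ t₂) (u₁ : E) :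
    ∃ v : ℝ → E, Measurable v ∧ v t₁ = u₁ ∧
      (∀ t ∈ Icc t₁ t₂, ‖v t‖ ≤ (‖u₁‖ + c) * Real.exp (K * (t - t₁)) - c) ∧
      ∀ t ∈ Icc t₁ t₂, IntervalIntegrable (fun s => g s (v s)) volume t₁ t ∧
        v t = u₁ + ∫ s in t₁..t, g s (v s) := by
  -- continuity in the space variable
  have cont_g : ∀ s, Continuous fun x => g s x := by
    intro s
    have : LipschitzWith (Real.toNNReal L) fun x => g s x := by
      apply LipschitzWith.of_dist_le_mul
      intro x y
      rw [dist_eq_norm, dist_eq_norm, Real.coe_toNNReal L hL]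
      exact hgl s x y
    exact this.continuous
  -- joint measurability
  have humeas : Measurable (Function.uncurry fun (x : E) (s : ℝ) => g s x) :=
    measurable_uncurry_of_continuous_of_measurable cont_g hgm
  have comp_meas : ∀ {u : ℝ → E}, Measurable u → Measurable fun s => g s (u s) := by
    intro u hu
    exact humeas.comp (hu.prodMk measurable_id)
  have comp_int : ∀ {u : ℝ → E}, Measurable u →
      ∀ a b : ℝ, IntervalIntegrable (fun s => g s (u s)) volume a b := by
    intro u hu a b
    refine (_root_.intervalIntegrable_const (μ := volume) (a := a) (b := b) (c := M)).mono_fun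
      (comp_meas hu).aestronglyMeasurable ?_
    filter_upwards with s
    simp only [Real.norm_eq_abs]
    exact (hgb s (u s)).trans (le_abs_self M)
  set P : ℕ → ℝ → E := picardIter g t₁ u₁ with hP
  have Pmeas : ∀ k, Measurable (P k) := by
    intro k
    induction k with
    | zero => exact measurable_const
    | succ k ih =>
        have : Continuous fun t => u₁ + ∫ s in t₁..t, g s (P k s) :=
          continuous_const.add (intervalIntegral.continuous_primitive (comp_int ih) t₁)
        exact this.measurable
  -- envelope bound
  have bound : ∀ k, ∀ t ∈ Icc t₁ t₂,
      ‖P k t‖ ≤ (‖u₁‖ + c) * Real.exp (K * (t - t₁)) - c := by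
    intro k
    induction k with
    | zero =>
        intro t htt
        have h1 : (1 : ℝ) ≤ Real.exp (K * (t - t₁)) :=
          Real.one_le_exp (by nlinarith [htt.1])
        have h0 : P 0 t = u₁ := rfl
        rw [h0]
        nlinarith [norm_nonneg u₁, h1]
    | succ k ih =>
        intro t htt
        have htt1 : t₁ ≤ t := htt.1
        have hPk : ∀ s ∈ Icc t₁ t, ‖g s (P k s)‖ ≤ K * ((‖u₁‖ + c) * Real.exp (K * (s - t₁))) := by
          intro s hs
          refine (hgrow s (P k s)).trans ?_
          have hs2 : s ∈ Icc t₁ t₂ := ⟨hs.1, hs.2.trans htt.2⟩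
          have := ih s hs2
          nlinarith [hK]
        have hint : ∫ s in t₁..t, Real.exp (K * (s - t₁))
            = (Real.exp (K * (t - t₁)) - 1) / K := by
          have h1 : (∫ s in t₁..t, Real.exp (K * (s - t₁)))
              = ∫ s in (t₁ - t₁)..(t - t₁), Real.exp (K * s) := by
            rw [← intervalIntegral.integral_comp_sub_right (fun s => Real.exp (K * s)) t₁]
          rw [h1, sub_self]
          rw [intervalIntegral.integral_comp_mul_left (fun s => Real.exp s) hK.ne']
          rw [mul_zero, integral_exp, Real.exp_zero, smul_eq_mul]
          field_simp
        calc ‖P (k+1) t‖ = ‖u₁ + ∫ s in t₁..t, g s (P k s)‖ := by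
              simp only [hP, picardIter]
          _ ≤ ‖u₁‖ + ‖∫ s in t₁..t, g s (P k s)‖ := norm_add_le _ _
          _ ≤ ‖u₁‖ + ∫ s in t₁..t, ‖g s (P k s)‖ := by
              gcongr
              exact intervalIntegral.norm_integral_le_integral_norm htt1
          _ ≤ ‖u₁‖ + ∫ s in t₁..t, K * ((‖u₁‖ + c) * Real.exp (K * (s - t₁))) := by
              gcongr
              refine intervalIntegral.integral_mono_on htt1
                ((comp_int (Pmeas k) t₁ t).norm) ?_ hPk
              exact (Continuous.intervalIntegrable (by continuity) _ _)
          _ = ‖u₁‖ + K * ((‖u₁‖ + c) * ((Real.exp (K * (t - t₁)) - 1) / K)) := by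
              rw [intervalIntegral.integral_const_mul, intervalIntegral.integral_const_mul, hint]
          _ = (‖u₁‖ + c) * Real.exp (K * (t - t₁)) - c := by
              field_simp
              ring
  -- successive differences
  have diff : ∀ k, ∀ t ∈ Icc t₁ t₂,
      ‖P (k+1) t - P k t‖ ≤ M * L ^ k * (t - t₁) ^ (k+1) / (k+1).factorial := by
    intro k
    induction k with
    | zero =>
        intro t htt
        have htt1 : t₁ ≤ t := htt.1
        have h0 : P 1 t - P 0 t = ∫ s in t₁..t, g s u₁ := by
          simp [hP, picardIter]
        have h := intervalIntegral.norm_integral_le_of_norm_le_const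
          (C := M) (a := t₁) (b := t) (f := fun s => g s u₁) (fun s _ => hgb s u₁)
        rw [abs_of_nonneg (by linarith : (0:ℝ) ≤ t - t₁)] at h
        rw [h0]
        refine h.trans ?_
        norm_num
    | succ k ih =>
        intro t htt
        have htt1 : t₁ ≤ t := htt.1
        have hdiff_int : IntervalIntegrable
            (fun s => g s (P (k+1) s) - g s (P k s)) volume t₁ t :=
          (comp_int (Pmeas (k+1)) t₁ t).sub (comp_int (Pmeas k) t₁ t)
        have hsplit : P (k+2) t - P (k+1) t
            = ∫ s in t₁..t, (g s (P (k+1) s) - g s (P k s)) := by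
          have : P (k+2) t = u₁ + ∫ s in t₁..t, g s (P (k+1) s) := by
            simp only [hP, picardIter]
          have h2 : P (k+1) t = u₁ + ∫ s in t₁..t, g s (P k s) := by
            simp only [hP, picardIter]
          rw [this, h2, intervalIntegral.integral_sub (comp_int (Pmeas (k+1)) t₁ t)
            (comp_int (Pmeas k) t₁ t)]
          abel
        have hpow : ∫ s in t₁..t, (s - t₁) ^ (k+1)
            = (t - t₁) ^ (k+2) / (k+2) := by
          have h1 : (∫ s in t₁..t, (s - t₁) ^ (k+1))
              = ∫ s in (t₁ - t₁)..(t - t₁), s ^ (k+1) := by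
            rw [← intervalIntegral.integral_comp_sub_right (fun s => s ^ (k+1)) t₁]
          rw [h1, sub_self, integral_pow]
          simp
          ring
        have hptwise : ∀ s ∈ Icc t₁ t, ‖g s (P (k+1) s) - g s (P k s)‖
            ≤ L * (M * L ^ k / (k+1).factorial) * (s - t₁) ^ (k+1) := by
          intro s hs
          have hs2 : s ∈ Icc t₁ t₂ := ⟨hs.1, hs.2.trans htt.2⟩
          calc ‖g s (P (k+1) s) - g s (P k s)‖ ≤ L * ‖P (k+1) s - P k s‖ := hgl s _ _
            _ ≤ L * (M * L ^ k * (s - t₁) ^ (k+1) / (k+1).factorial) := by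
                have := ih s hs2
                gcongr
            _ = L * (M * L ^ k / (k+1).factorial) * (s - t₁) ^ (k+1) := by ring
        calc ‖P (k+2) t - P (k+1) t‖
            = ‖∫ s in t₁..t, (g s (P (k+1) s) - g s (P k s))‖ := by rw [hsplit]
          _ ≤ ∫ s in t₁..t, ‖g s (P (k+1) s) - g s (P k s)‖ :=
              intervalIntegral.norm_integral_le_integral_norm htt1
          _ ≤ ∫ s in t₁..t, L * (M * L ^ k / (k+1).factorial) * (s - t₁) ^ (k+1) := by
              refine intervalIntegral.integral_mono_on htt1 hdiff_int.norm ?_ hptwise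
              exact Continuous.intervalIntegrable (by continuity) _ _
          _ = L * (M * L ^ k / (k+1).factorial) * ((t - t₁) ^ (k+2) / (k+2)) := by
              rw [intervalIntegral.integral_const_mul, hpow]
          _ = M * L ^ (k+1) * (t - t₁) ^ (k+2) / (k+2).factorial := by
              rw [Nat.factorial_succ (k+1)]
              push_cast
              field_simp
              ring
  -- summable bound
  set τ := t₂ - t₁ with hτ
  have hτ0 : 0 ≤ τ := by linarith
  set d : ℕ → ℝ := fun k => M * L ^ k * τ ^ (k+1) / (k+1).factorial with hd_def
  have hd0 : ∀ k, 0 ≤ d k := by intro k; positivity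
  have hdist : ∀ (k : ℕ), ∀ t ∈ Icc t₁ t₂, dist (P k t) (P (k+1) t) ≤ d k := by
    intro k t htt
    rw [dist_eq_norm, norm_sub_rev]
    refine (diff k t htt).trans ?_
    have h1 : (t - t₁) ^ (k+1) ≤ τ ^ (k+1) := by
      apply pow_le_pow_left₀ (by linarith [htt.1]) (by simp only [hτ]; linarith [htt.2])
    rw [hd_def]
    rw [div_le_div_iff_of_pos_right (by positivity)]
    have h2 : (0:ℝ) ≤ M * L ^ k := by positivity
    nlinarith [h1, h2]
  have hsum : Summable d := by
    refine Summable.of_nonneg_of_le hd0 ?_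
      ((Real.summable_pow_div_factorial (L * τ)).mul_left (M * τ))
    · intro k
      rw [hd_def]
      have h1 : ((k+1).factorial : ℝ) ≠ 0 := by positivity
      calc M * L ^ k * τ ^ (k+1) / (k+1).factorial
          ≤ M * L ^ k * τ ^ (k+1) / (Nat.factorial k) := by
            apply div_le_div_of_nonneg_left (by positivity) (by positivity)
            exact_mod_cast Nat.factorial_le (Nat.le_succ k)
        _ = (M * τ) * ((L * τ) ^ k / (Nat.factorial k)) := by rw [mul_pow]; ring
  -- limit
  set Q : ℕ → ℝ → E := fun k t => if t ∈ Icc t₁ t₂ then P k t else u₁ with hQ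
  have hQmeas : ∀ k, Measurable (Q k) := fun k =>
    Measurable.ite measurableSet_Icc (Pmeas k) measurable_const
  have hex : ∀ t, ∃ y, Tendsto (fun k => Q k t) atTop (𝓝 y) := by
    intro t
    by_cases htt : t ∈ Icc t₁ t₂
    · have hcs : CauchySeq fun k => P k t :=
        cauchySeq_of_dist_le_of_summable d (fun k => hdist k t htt) hsum
      obtain ⟨y, hy⟩ := cauchySeq_tendsto_of_complete hcs
      refine ⟨y, ?_⟩
      have hfe : (fun k => Q k t) = fun k => P k t := by
        funext k; simp only [hQ]; rw [if_pos htt]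
      rw [hfe]; exact hy
    · refine ⟨u₁, ?_⟩
      have hfe : (fun k => Q k t) = fun _ => u₁ := by
        funext k; simp only [hQ]; rw [if_neg htt]
      rw [hfe]; exact tendsto_const_nhds
  choose v hv using hex
  have hvmeas : Measurable v :=
    measurable_of_tendsto_metrizable hQmeas (tendsto_pi_nhds.mpr hv)
  have hPv : ∀ t ∈ Icc t₁ t₂, Tendsto (fun k => P k t) atTop (𝓝 (v t)) := by
    intro t htt
    have h := hv t
    have hfe : (fun k => Q k t) = fun k => P k t := by
      funext k; simp only [hQ]; rw [if_pos htt]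
    rwa [hfe] at h
  -- envelope for v
  have hvb : ∀ t ∈ Icc t₁ t₂, ‖v t‖ ≤ (‖u₁‖ + c) * Real.exp (K * (t - t₁)) - c := by
    intro t htt
    exact le_of_tendsto (hPv t htt).norm (Eventually.of_forall fun k => bound k t htt)
  -- tails
  set tl : ℕ → ℝ := fun k => ∑' m, d (k + m) with htl
  have htail : ∀ (k : ℕ), ∀ t ∈ Icc t₁ t₂, dist (P k t) (v t) ≤ tl k := by
    intro k t htt
    exact dist_le_tsum_of_dist_le_of_tendsto d (fun m => hdist m t htt) hsum (hPv t htt) k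
  have htl0 : Tendsto tl atTop (𝓝 0) := by
    have h1 : ∀ k, tl k = (∑' m, d m) - ∑ i ∈ Finset.range k, d i := by
      intro k
      have := hsum.sum_add_tsum_nat_add k
      have h2 : tl k = ∑' m, d (m + k) := by
        rw [htl]
        exact tsum_congr fun m => by rw [add_comm]
      linarith [this, h2]
    have h2 : Tendsto (fun k => (∑' m, d m) - ∑ i ∈ Finset.range k, d i) atTop
        (𝓝 ((∑' m, d m) - ∑' m, d m)) :=
      tendsto_const_nhds.sub hsum.hasSum.tendsto_sum_nat
    rw [sub_self] at h2
    exact h2.congr fun k => (h1 k).symm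
  -- the integral equation
  have heq : ∀ t ∈ Icc t₁ t₂, v t = u₁ + ∫ s in t₁..t, g s (v s) := by
    intro t htt
    have htt1 : t₁ ≤ t := htt.1
    have h1 : Tendsto (fun k => P (k+1) t) atTop (𝓝 (v t)) :=
      (hPv t htt).comp (tendsto_add_atTop_nat 1)
    have h2 : Tendsto (fun k => ∫ s in t₁..t, g s (P k s)) atTop
        (𝓝 (∫ s in t₁..t, g s (v s))) := by
      rw [tendsto_iff_dist_tendsto_zero]
      apply squeeze_zero (fun k => dist_nonneg)
        (g := fun k => L * tl k * (t - t₁))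
      · intro k
        rw [dist_eq_norm, ← intervalIntegral.integral_sub (comp_int (Pmeas k) t₁ t)
          (comp_int hvmeas t₁ t)]
        have hb : ∀ s ∈ Set.uIoc t₁ t, ‖g s (P k s) - g s (v s)‖ ≤ L * tl k := by
          intro s hs
          have hs' : s ∈ Icc t₁ t₂ := by
            rcases hs with ⟨hs1, hs2⟩
            constructor
            · have := min_le_left t₁ t; rw [min_eq_left htt1] at hs1; linarith
            · have : max t₁ t = t := max_eq_right htt1
              rw [this] at hs2; exact hs2.trans htt.2
          calc ‖g s (P k s) - g s (v s)‖ ≤ L * ‖P k s - v s‖ := hgl s _ _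
            _ ≤ L * tl k := by
                have := htail k s hs'
                rw [dist_eq_norm] at this
                gcongr
        calc ‖∫ s in t₁..t, (g s (P k s) - g s (v s))‖ ≤ L * tl k * |t - t₁| :=
              intervalIntegral.norm_integral_le_of_norm_le_const hb
          _ = L * tl k * (t - t₁) := by rw [abs_of_nonneg (by linarith)]
      · have : Tendsto (fun k => L * tl k * (t - t₁)) atTop (𝓝 (L * 0 * (t - t₁))) :=
          ((tendsto_const_nhds.mul htl0).mul tendsto_const_nhds)
        simpa using this
    have h3 : Tendsto (fun k => P (k+1) t) atTop
        (𝓝 (u₁ + ∫ s in t₁..t, g s (v s))) := by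
      have := tendsto_const_nhds (x := u₁) (f := atTop (α := ℕ)) |>.add h2
      apply this.congr
      intro k
      simp only [hP, picardIter]
    exact tendsto_nhds_unique h1 h3
  refine ⟨v, hvmeas, ?_, hvb, fun t htt => ⟨comp_int hvmeas t₁ t, heq t htt⟩⟩
  have := heq t₁ ⟨le_rfl, ht⟩
  simpa using this

end Step

lemma IntervalIntegrable.congr_eqOn {F : Type*} [NormedAddCommGroup F] {f g : ℝ → F} {a b : ℝ}
    (h : IntervalIntegrable f volume a b) (he : Set.EqOn f g (Set.uIcc a b)) :
    IntervalIntegrable g volume a b := by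
  rw [intervalIntegrable_iff] at h ⊢
  exact h.congr_fun (fun x hx => he (Set.uIoc_subset_uIcc hx)) measurableSet_uIoc

set_option maxHeartbeats 1000000 in
/-- Global existence for `u' = f(t,u)` when, for each `R`, `f` is measurable in
time, `F_L(R)`-Lipschitz and bounded by `F_∞(R)` on the ball of radius `R`, and
`limsup_{R→∞} F_∞(R)/(R ln R) < ∞`: through every initial datum there is a
global Carathéodory solution on `[t₀, ∞)`. -/
theorem ode_global_existence (n : ℕ)
    (f : ℝ → EuclideanSpace ℝ (Fin n) → EuclideanSpace ℝ (Fin n))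
    (FL Finf : ℝ → ℝ)
    (hmeas : ∀ R > 0, ∀ u ∈ Metric.closedBall (0 : EuclideanSpace ℝ (Fin n)) R,
      Measurable fun t => f t u)
    (hlip : ∀ R > 0, ∀ t, 0 ≤ t →
      ∀ u₁ ∈ Metric.closedBall (0 : EuclideanSpace ℝ (Fin n)) R,
      ∀ u₂ ∈ Metric.closedBall (0 : EuclideanSpace ℝ (Fin n)) R,
      ‖f t u₁ - f t u₂‖ ≤ FL R * ‖u₁ - u₂‖)
    (hbdd : ∀ R > 0, ∀ t, 0 ≤ t →
      ∀ u ∈ Metric.closedBall (0 : EuclideanSpace ℝ (Fin n)) R,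
      ‖f t u‖ ≤ Finf R)
    (hFinfpos : ∀ R > 0, 0 < Finf R)
    (hlimsup : ∃ C : ℝ, ∀ᶠ R in atTop, Finf R / (R * Real.log R) ≤ C)
    (t₀ : ℝ) (ht₀ : 0 ≤ t₀) (u₀ : EuclideanSpace ℝ (Fin n)) :
    ∃ u : ℝ → EuclideanSpace ℝ (Fin n),
      u t₀ = u₀ ∧ ∀ t, t₀ ≤ t → u t = u₀ + ∫ s in t₀..t, f s (u s) := by
  classical
  obtain ⟨C, hC⟩ := hlimsup
  rw [eventually_atTop] at hC
  obtain ⟨a, ha⟩ := hC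
  set R₀ : ℝ := max a 3 with hR₀
  have hR₀3 : (3:ℝ) ≤ R₀ := le_max_right _ _
  have hR₀pos : (0:ℝ) < R₀ := by linarith
  have hlog3 : (1:ℝ) ≤ Real.log 3 := by
    rw [Real.le_log_iff_exp_le (by norm_num)]
    calc Real.exp 1 ≤ 2.7182818286 := Real.exp_one_lt_d9.le
      _ ≤ 3 := by norm_num
  have hlogR₀ : (1:ℝ) ≤ Real.log R₀ :=
    hlog3.trans (Real.log_le_log (by norm_num) hR₀3)
  set C' : ℝ := max C 1 + Finf R₀ with hC'
  have hFR₀ : 0 < Finf R₀ := hFinfpos R₀ hR₀pos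
  have hmax1 : (1:ℝ) ≤ max C 1 := le_max_right _ _
  have hC'1 : (1:ℝ) ≤ C' := by rw [hC']; linarith
  have hC'pos : (0:ℝ) < C' := by linarith
  -- growth estimate
  have hstar : ∀ t, 0 ≤ t → ∀ x : EuclideanSpace ℝ (Fin n),
      ‖f t x‖ ≤ C' * (max ‖x‖ R₀ * Real.log (max ‖x‖ R₀)) := by
    intro t ht x
    rcases le_total ‖x‖ R₀ with h | h
    · rw [max_eq_right h]
      have h1 : ‖f t x‖ ≤ Finf R₀ := by
        apply hbdd R₀ hR₀pos t ht
        simpa [Metric.mem_closedBall, dist_zero_right] using h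
      have h2 : (1:ℝ) ≤ R₀ * Real.log R₀ := by nlinarith
      have h3 : Finf R₀ ≤ C' := by rw [hC']; linarith
      calc ‖f t x‖ ≤ Finf R₀ := h1
        _ = Finf R₀ * 1 := (mul_one _).symm
        _ ≤ C' * (R₀ * Real.log R₀) := mul_le_mul h3 h2 one_pos.le (by linarith)
    · rw [max_eq_left h]
      have hx3 : (3:ℝ) ≤ ‖x‖ := hR₀3.trans h
      have hxpos : (0:ℝ) < ‖x‖ := by linarith
      have hlogx : (1:ℝ) ≤ Real.log ‖x‖ :=
        hlog3.trans (Real.log_le_log (by norm_num) hx3)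
      have h1 : ‖f t x‖ ≤ Finf ‖x‖ := by
        apply hbdd ‖x‖ hxpos t ht
        simp [Metric.mem_closedBall, dist_zero_right]
      have h2 : Finf ‖x‖ / (‖x‖ * Real.log ‖x‖) ≤ C :=
        ha ‖x‖ ((le_max_left a 3).trans h)
      have hpos : (0:ℝ) < ‖x‖ * Real.log ‖x‖ := by nlinarith
      have h3 : Finf ‖x‖ ≤ C * (‖x‖ * Real.log ‖x‖) := by
        rw [div_le_iff₀ hpos] at h2; linarith
      have h4 : C ≤ C' := by
        have : C ≤ max C 1 := le_max_left _ _
        rw [hC']; linarith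
      calc ‖f t x‖ ≤ Finf ‖x‖ := h1
        _ ≤ C * (‖x‖ * Real.log ‖x‖) := h3
        _ ≤ C' * (‖x‖ * Real.log ‖x‖) := by nlinarith
  set τ : ℝ := 1 / (2 * C') with hτ
  have hτpos : 0 < τ := by rw [hτ]; positivity
  -- one step of existence
  have key : ∀ t₁, 0 ≤ t₁ → ∀ u₁ : EuclideanSpace ℝ (Fin n),
      ∃ v : ℝ → EuclideanSpace ℝ (Fin n), v t₁ = u₁ ∧
        ∀ t ∈ Set.Icc t₁ (t₁ + τ),
          IntervalIntegrable (fun s => f s (v s)) volume t₁ t ∧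
          v t = u₁ + ∫ s in t₁..t, f s (v s) := by
    intro t₁ ht₁ u₁
    set N : ℝ := ‖u₁‖ with hN
    have hN0 : 0 ≤ N := norm_nonneg _
    set R : ℝ := (N + R₀)^2 with hR
    have hNR₀3 : (3:ℝ) ≤ N + R₀ := by linarith
    have hRpos : 0 < R := by rw [hR]; positivity
    have hR₀R : R₀ ≤ R := by rw [hR]; nlinarith
    have hlogR : Real.log R = 2 * Real.log (N + R₀) := by
      rw [hR, Real.log_pow]; push_cast; ring
    have hlogNR : (1:ℝ) ≤ Real.log (N + R₀) :=
      hlog3.trans (Real.log_le_log (by norm_num) hNR₀3)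
    set K : ℝ := C' * Real.log R with hK
    have hKpos : 0 < K := by rw [hK, hlogR]; nlinarith
    set L : ℝ := 2 * max (FL R) 0 with hL
    have hLnn : 0 ≤ L := by rw [hL]; positivity
    set M : ℝ := Finf R with hM
    have hMpos : 0 < M := hFinfpos R hRpos
    set g : ℝ → EuclideanSpace ℝ (Fin n) → EuclideanSpace ℝ (Fin n) :=
      fun s x => f (max s 0) (ballProj R x) with hg
    have hproj_mem : ∀ x : EuclideanSpace ℝ (Fin n),
        ballProj R x ∈ Metric.closedBall (0 : EuclideanSpace ℝ (Fin n)) R := by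
      intro x
      simpa [Metric.mem_closedBall, dist_zero_right] using ballProj_le_R hRpos x
    have hgm : ∀ x, Measurable fun s => g s x := by
      intro x
      exact (hmeas R hRpos _ (hproj_mem x)).comp (measurable_id.max measurable_const)
    have hgl : ∀ s x y, ‖g s x - g s y‖ ≤ L * ‖x - y‖ := by
      intro s x y
      have h1 := hlip R hRpos (max s 0) (le_max_right _ _) _ (hproj_mem x) _ (hproj_mem y)
      have h2 := ballProj_lipschitz hRpos x y
      have h3 : FL R * ‖ballProj R x - ballProj R y‖
          ≤ max (FL R) 0 * ‖ballProj R x - ballProj R y‖ :=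
        mul_le_mul_of_nonneg_right (le_max_left _ _) (norm_nonneg _)
      have h4 : max (FL R) 0 * ‖ballProj R x - ballProj R y‖
          ≤ max (FL R) 0 * (2 * ‖x - y‖) :=
        mul_le_mul_of_nonneg_left h2 (le_max_right _ _)
      calc ‖g s x - g s y‖ ≤ FL R * ‖ballProj R x - ballProj R y‖ := h1
        _ ≤ max (FL R) 0 * (2 * ‖x - y‖) := h3.trans h4
        _ = L * ‖x - y‖ := by rw [hL]; ring
    have hgb : ∀ s x, ‖g s x‖ ≤ M := fun s x =>
      hbdd R hRpos _ (le_max_right _ _) _ (hproj_mem x)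
    have hgrow : ∀ s x, ‖g s x‖ ≤ K * (‖x‖ + R₀) := by
      intro s x
      have h1 := hstar (max s 0) (le_max_right _ _) (ballProj R x)
      set m : ℝ := max ‖ballProj R x‖ R₀ with hm
      have hm1 : m ≤ R := max_le (ballProj_le_R hRpos x) hR₀R
      have hm2 : m ≤ ‖x‖ + R₀ := by
        have h5 := ballProj_le_norm hRpos x
        apply max_le
        · nlinarith
        · nlinarith [norm_nonneg x]
      have hmpos : 0 < m := lt_of_lt_of_le hR₀pos (le_max_right _ _)
      have hlogm : Real.log m ≤ Real.log R := Real.log_le_log hmpos hm1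
      have hlogm0 : 0 ≤ Real.log m := by
        have : Real.log R₀ ≤ Real.log m := Real.log_le_log hR₀pos (le_max_right _ _)
        linarith
      calc ‖g s x‖ ≤ C' * (m * Real.log m) := h1
        _ ≤ C' * ((‖x‖ + R₀) * Real.log R) := by
            have h6 : m * Real.log m ≤ (‖x‖ + R₀) * Real.log R :=
              mul_le_mul hm2 hlogm hlogm0 (by positivity)
            nlinarith
        _ = K * (‖x‖ + R₀) := by rw [hK]; ring
    obtain ⟨v, hvmeas, hv1, hvb, hveq⟩ :=
      caratheodory_step g L M K R₀ hLnn hMpos.le hKpos hR₀pos.le hgm hgl hgb hgrow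
        t₁ (t₁ + τ) (by linarith) u₁
    have hvR : ∀ s ∈ Set.Icc t₁ (t₁ + τ), ‖v s‖ ≤ R := by
      intro s hs
      have h1 := hvb s hs
      have h2 : K * (s - t₁) ≤ Real.log (N + R₀) := by
        have hsle : s - t₁ ≤ τ := by linarith [hs.2]
        have h7 : K * (s - t₁) ≤ K * τ := by nlinarith
        refine h7.trans ?_
        rw [hK, hlogR, hτ]
        rw [mul_one_div]
        rw [div_le_iff₀ (by positivity)]
        ring_nf
        nlinarith
      have h3 : Real.exp (K * (s - t₁)) ≤ N + R₀ := by
        calc Real.exp (K * (s - t₁)) ≤ Real.exp (Real.log (N + R₀)) :=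
              Real.exp_le_exp.2 h2
          _ = N + R₀ := Real.exp_log (by linarith)
      have h8 : 0 < Real.exp (K * (s - t₁)) := Real.exp_pos _
      calc ‖v s‖ ≤ (N + R₀) * Real.exp (K * (s - t₁)) - R₀ := h1
        _ ≤ (N + R₀) * (N + R₀) - R₀ := by nlinarith
        _ ≤ R := by rw [hR]; nlinarith
    have heqon : ∀ t ∈ Set.Icc t₁ (t₁ + τ),
        Set.EqOn (fun s => g s (v s)) (fun s => f s (v s)) (Set.uIcc t₁ t) := by
      intro t ht s hs
      rw [Set.uIcc_of_le ht.1] at hs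
      have hs0 : 0 ≤ s := le_trans ht₁ hs.1
      have hsIcc : s ∈ Set.Icc t₁ (t₁ + τ) := ⟨hs.1, hs.2.trans ht.2⟩
      simp only [hg]
      rw [max_eq_left hs0, ballProj_eq_self hRpos (hvR s hsIcc)]
    refine ⟨v, hv1, fun t ht => ?_⟩
    obtain ⟨hint, heq⟩ := hveq t ht
    refine ⟨hint.congr_eqOn (heqon t ht), ?_⟩
    rw [heq, intervalIntegral.integral_congr (heqon t ht)]
  -- gluing
  choose step hstep1 hstep2 using key
  set T : ℕ → ℝ := fun k => t₀ + k * τ with hT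
  have hTsucc : ∀ k : ℕ, T (k+1) = T k + τ := by
    intro k; rw [hT]; push_cast; ring
  have hTmono : ∀ k, T k ≤ T (k+1) := by
    intro k; rw [hTsucc k]; linarith
  have hT0 : ∀ k, 0 ≤ T k := by
    intro k
    have h9 : 0 ≤ (k:ℝ) * τ := by positivity
    rw [hT]; dsimp only; linarith
  obtain ⟨w, hw0, hwsucc⟩ :
      ∃ w : ℕ → ℝ → EuclideanSpace ℝ (Fin n), w 0 = step t₀ ht₀ u₀ ∧
        ∀ k, w (k+1) = step (T (k+1)) (hT0 (k+1)) (w k (T (k+1))) :=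
    ⟨fun k => Nat.rec (step t₀ ht₀ u₀)
      (fun k wk => step (T (k+1)) (hT0 (k+1)) (wk (T (k+1)))) k, rfl, fun _ => rfl⟩
  set idx : ℝ → ℕ := fun t => ⌊(t - t₀) / τ⌋₊ with hidx
  set u : ℝ → EuclideanSpace ℝ (Fin n) := fun t => w (idx t) t with hu
  have hidx_eq : ∀ (k : ℕ) (t : ℝ), T k ≤ t → t < T (k+1) → idx t = k := by
    intro k t h1 h2
    simp only [hidx]
    have hk : (k:ℝ) ≤ (t - t₀) / τ := by
      rw [le_div_iff₀ hτpos]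
      rw [hT] at h1; dsimp only at h1; linarith
    have hk2 : (t - t₀) / τ < k + 1 := by
      rw [div_lt_iff₀ hτpos]
      rw [hT] at h2; dsimp only at h2; push_cast at h2 ⊢; linarith
    have h0 : 0 ≤ (t - t₀) / τ := le_trans (by positivity) hk
    rw [Nat.floor_eq_iff h0]
    exact ⟨hk, by push_cast; linarith⟩
  have hidx_eq' : ∀ (k : ℕ), idx (T (k+1)) = k + 1 := by
    intro k
    simp only [hidx]
    have h9 : (T (k+1) - t₀) / τ = ((k+1 : ℕ) : ℝ) := by
      rw [hT]; push_cast; field_simp; ring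
    rw [h9, Nat.floor_natCast]
  have hagree : ∀ k, ∀ t ∈ Set.Icc (T k) (T (k+1)), u t = w k t := by
    intro k t htk
    rcases lt_or_eq_of_le htk.2 with hlt | he
    · rw [hu]; dsimp only
      rw [hidx_eq k t htk.1 hlt]
    · rw [hu]; dsimp only
      rw [he, hidx_eq' k, hwsucc k, hstep1]
  have main : ∀ k, ∀ t ∈ Set.Icc (T k) (T (k+1)),
      IntervalIntegrable (fun s => f s (u s)) volume t₀ t ∧
      u t = u₀ + ∫ s in t₀..t, f s (u s) := by
    intro k
    induction k with
    | zero =>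
        intro t htk
        have hT0t : T 0 = t₀ := by rw [hT]; push_cast; ring
        have h := hstep2 t₀ ht₀ u₀ t (by rw [hT0t, hTsucc 0, hT0t] at htk; exact htk)
        have hcong : Set.EqOn (fun s => f s (step t₀ ht₀ u₀ s))
            (fun s => f s (u s)) (Set.uIcc t₀ t) := by
          intro s hs
          rw [Set.uIcc_of_le (hT0t ▸ htk.1)] at hs
          have hsmem : s ∈ Set.Icc (T 0) (T 1) := ⟨hT0t ▸ hs.1, hs.2.trans htk.2⟩
          dsimp only
          rw [hagree 0 s hsmem, hw0]
        refine ⟨h.1.congr_eqOn hcong, ?_⟩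
        rw [hagree 0 t htk, hw0, h.2, intervalIntegral.integral_congr hcong]
    | succ k ih =>
        intro t htk
        have h := hstep2 (T (k+1)) (hT0 (k+1)) (w k (T (k+1))) t
          (by rw [← hTsucc (k+1)]; exact htk)
        rw [← hwsucc k] at h
        have ih' := ih (T (k+1)) ⟨hTmono k, le_rfl⟩
        have hu_init : u (T (k+1)) = w k (T (k+1)) := hagree k _ ⟨hTmono k, le_rfl⟩
        have hcong : Set.EqOn (fun s => f s (w (k+1) s))
            (fun s => f s (u s)) (Set.uIcc (T (k+1)) t) := by
          intro s hs
          rw [Set.uIcc_of_le htk.1] at hs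
          have hsmem : s ∈ Set.Icc (T (k+1)) (T (k+2)) := ⟨hs.1, hs.2.trans htk.2⟩
          dsimp only
          rw [hagree (k+1) s hsmem]
        have hint2 : IntervalIntegrable (fun s => f s (u s)) volume (T (k+1)) t :=
          h.1.congr_eqOn hcong
        have hint1 := ih'.1
        refine ⟨hint1.trans hint2, ?_⟩
        rw [hagree (k+1) t htk, h.2, intervalIntegral.integral_congr hcong,
          ← hu_init, ih'.2, add_assoc,
          intervalIntegral.integral_add_adjacent_intervals hint1 hint2]
  have hT0t : T 0 = t₀ := by rw [hT]; push_cast; ring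
  refine ⟨u, ?_, ?_⟩
  · have h := hagree 0 t₀ ⟨le_of_eq hT0t, by rw [hTsucc 0, hT0t]; linarith⟩
    rw [h, hw0, hstep1]
  · intro t htt
    set k : ℕ := idx t with hk
    have h1 : T k ≤ t := by
      rw [hT]; dsimp only
      have h2 : (k:ℝ) ≤ (t - t₀) / τ := by
        simp only [hk, hidx]; exact Nat.floor_le (div_nonneg (by linarith) hτpos.le)
      rw [le_div_iff₀ hτpos] at h2; linarith
    have h2 : t ≤ T (k+1) := by
      rw [hT]; dsimp only
      have h3 : (t - t₀) / τ < k + 1 := by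
        simp only [hk, hidx]; exact_mod_cast Nat.lt_floor_add_one ((t - t₀) / τ)
      rw [div_lt_iff₀ hτpos] at h3; push_cast; linarith
    exact (main k t ⟨h1, h2⟩).2
end
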